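/- There exist constants C > 1 and M > 0 such that for all real x > M, (1/C) · e^x/√x ≤ I₀(x) ≤ C · e^x/√x, where I₀ is the modified Bessel function of the first kind of order zero. -/

import Mathlib

open scoped Nat

set_option maxHeartbeats 1600000

/-- The modified Bessel function of the first kind of order zero,
`I₀(x) = Σ_{m=0}^∞ (x/2)^{2m}/(m!)²`. -/
noncomputable def besselI0 (x : ℝ) : ℝ :=
  ∑' m : ℕ, (x / 2) ^ (2 * m) / ((m.factorial : ℝ)) ^ 2


private lemma sqrt_step {a b u v : ℝ} (ha : 0 ≤ a) (hb : 0 ≤ b) (hu : 0 ≤ u)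
    (h : a^2*u ≤ b^2*v) : a * Real.sqrt u ≤ b * Real.sqrt v := by
  calc a * Real.sqrt u = Real.sqrt (a^2*u) := by
        rw [Real.sqrt_mul (sq_nonneg a), Real.sqrt_sq ha]
    _ ≤ Real.sqrt (b^2*v) := Real.sqrt_le_sqrt h
    _ = b * Real.sqrt v := by rw [Real.sqrt_mul (sq_nonneg b), Real.sqrt_sq hb]

private lemma cb_key (n : ℕ) :
    ((n:ℝ)+1) * Nat.centralBinom (n+1) = 2*(2*n+1) * Nat.centralBinom n := by
  have h : (((n+1) * Nat.centralBinom (n+1) : ℕ) : ℝ)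
      = ((2*(2*n+1) * Nat.centralBinom n : ℕ) : ℝ) := by
    rw [Nat.succ_mul_centralBinom_succ]
  push_cast at h
  linarith

private lemma cb_upper (m : ℕ) :
    (Nat.centralBinom m : ℝ) * Real.sqrt (3*m+1) ≤ 4 ^ m := by
  induction m with
  | zero => simp [Nat.centralBinom_zero]
  | succ n ih =>
    have key := cb_key n
    have hcb : (0:ℝ) ≤ Nat.centralBinom n := Nat.cast_nonneg _
    have hstep : (2*(2*(n:ℝ)+1)) * Real.sqrt (3*(n+1)+1) ≤ (4*((n:ℝ)+1)) * Real.sqrt (3*n+1) := by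
      apply sqrt_step (by positivity) (by positivity) (by positivity)
      nlinarith [sq_nonneg (n:ℝ)]
    have hn1 : (0:ℝ) < (n:ℝ)+1 := by positivity
    rw [← mul_le_mul_iff_right₀ hn1]
    push_cast
    calc ((n:ℝ)+1) * ((Nat.centralBinom (n+1) : ℝ) * Real.sqrt (3*((n:ℝ)+1)+1))
        = (2*(2*(n:ℝ)+1) * Nat.centralBinom n) * Real.sqrt (3*((n:ℝ)+1)+1) := by
          rw [← mul_assoc]
          rw [show ((n:ℝ)+1) * (Nat.centralBinom (n+1):ℝ) = 2*(2*(n:ℝ)+1) * Nat.centralBinom n from by push_cast at key ⊢; linarith]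
      _ = (Nat.centralBinom n : ℝ) * ((2*(2*(n:ℝ)+1)) * Real.sqrt (3*((n:ℝ)+1)+1)) := by
          ring
      _ ≤ (Nat.centralBinom n : ℝ) * ((4*((n:ℝ)+1)) * Real.sqrt (3*(n:ℝ)+1)) := by
          apply mul_le_mul_of_nonneg_left _ hcb
          convert hstep using 3 <;> push_cast <;> ring
      _ = (4*((n:ℝ)+1)) * ((Nat.centralBinom n : ℝ) * Real.sqrt (3*(n:ℝ)+1)) := by ring
      _ ≤ (4*((n:ℝ)+1)) * 4^n := by
          exact mul_le_mul_of_nonneg_left ih (by positivity)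
      _ = ((n:ℝ)+1) * 4^(n+1) := by ring

private lemma cb_lower (m : ℕ) (hm : 1 ≤ m) :
    (4:ℝ)^m ≤ 2 * Real.sqrt m * Nat.centralBinom m := by
  induction m with
  | zero => omega
  | succ n ih =>
    rcases Nat.eq_or_lt_of_le hm with h1 | h1
    · have : n = 0 := by omega
      subst this
      norm_num [Nat.centralBinom]
    have hn : 1 ≤ n := by omega
    have ih := ih hn
    have key := cb_key n
    have hcb : (0:ℝ) ≤ Nat.centralBinom n := Nat.cast_nonneg _
    have hstep : (2*((n:ℝ)+1)) * Real.sqrt n ≤ (2*(n:ℝ)+1) * Real.sqrt ((n:ℝ)+1) := by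
      apply sqrt_step (by positivity) (by positivity) (by positivity)
      nlinarith [sq_nonneg (n:ℝ)]
    have hn1 : (0:ℝ) < (n:ℝ)+1 := by positivity
    rw [← mul_le_mul_iff_right₀ hn1]
    push_cast
    calc ((n:ℝ)+1) * (4:ℝ)^(n+1) = (4*((n:ℝ)+1)) * 4^n := by ring
      _ ≤ (4*((n:ℝ)+1)) * (2 * Real.sqrt n * Nat.centralBinom n) := by
          apply mul_le_mul_of_nonneg_left ih (by positivity)
      _ = ((2*((n:ℝ)+1)) * Real.sqrt n) * (4 * Nat.centralBinom n) := by ring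
      _ ≤ ((2*(n:ℝ)+1) * Real.sqrt ((n:ℝ)+1)) * (4 * Nat.centralBinom n) := by
          apply mul_le_mul_of_nonneg_right hstep (by positivity)
      _ = 2 * Real.sqrt ((n:ℝ)+1) * (2*(2*(n:ℝ)+1) * Nat.centralBinom n) := by ring
      _ = 2 * Real.sqrt ((n:ℝ)+1) * (((n:ℝ)+1) * Nat.centralBinom (n+1)) := by rw [← key]
      _ = ((n:ℝ)+1) * (2 * Real.sqrt ((n:ℝ)+1) * Nat.centralBinom (n+1)) := by ring


private lemma exp_tsum (x : ℝ) : Real.exp x = ∑' n : ℕ, x ^ n / n ! := by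
  rw [Real.exp_eq_exp_ℝ, NormedSpace.exp_eq_tsum_div]

private lemma term_le_exp {x : ℝ} (hx : 0 ≤ x) (n : ℕ) : x ^ n / n ! ≤ Real.exp x := by
  rw [exp_tsum]
  exact Summable.le_tsum (Real.summable_pow_div_factorial x) n
    (fun m _ => by positivity)

private lemma sum_even {x : ℝ} : Summable (fun m : ℕ => x ^ (2*m) / ((2*m)! : ℝ)) := by
  apply Summable.of_nonneg_of_le (fun m => by
      rw [pow_mul]; positivity)
    (fun m => ?_) (Real.summable_pow_div_factorial (x^2))
  rw [pow_mul]
  apply div_le_div_of_nonneg_left (by positivity) (by positivity)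
  exact_mod_cast Nat.factorial_le (by omega)

private lemma sum_odd {x : ℝ} : Summable (fun m : ℕ => x ^ (2*m+1) / ((2*m+1)! : ℝ)) := by
  apply Summable.of_norm
  apply Summable.of_nonneg_of_le (fun m => norm_nonneg _)
    (fun m => ?_) ((Real.summable_pow_div_factorial (x^2)).mul_left |x|)
  rw [Real.norm_eq_abs, abs_div, abs_pow, abs_of_nonneg (by positivity : (0:ℝ) ≤ ((2*m+1)! : ℝ))]
  rw [pow_succ, pow_mul, sq_abs]
  rw [show (x^2)^m * |x| / ((2*m+1)! :ℝ) = |x| * ((x^2)^m / ((2*m+1)! :ℝ)) from by ring]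
  apply mul_le_mul_of_nonneg_left _ (abs_nonneg x)
  apply div_le_div_of_nonneg_left (by positivity) (by positivity)
  exact_mod_cast Nat.factorial_le (by omega)

private lemma even_tsum_eq (x : ℝ) :
    ∑' m : ℕ, x ^ (2*m) / ((2*m)! : ℝ) = (Real.exp x + Real.exp (-x)) / 2 := by
  have h1 : (∑' m : ℕ, x ^ (2*m) / ((2*m)! : ℝ)) + ∑' m : ℕ, x ^ (2*m+1) / ((2*m+1)! : ℝ)
      = Real.exp x := by
    rw [exp_tsum]
    exact tsum_even_add_odd (f := fun n : ℕ => x ^ n / (n ! : ℝ)) sum_even sum_odd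
  have h2 : (∑' m : ℕ, x ^ (2*m) / ((2*m)! : ℝ)) - ∑' m : ℕ, x ^ (2*m+1) / ((2*m+1)! : ℝ)
      = Real.exp (-x) := by
    rw [exp_tsum]
    have he : (fun m : ℕ => (-x) ^ (2*m) / ((2*m)! : ℝ)) = fun m : ℕ => x ^ (2*m) / ((2*m)! : ℝ) := by
      funext m
      rw [pow_mul, pow_mul, neg_sq]
    have ho : (fun m : ℕ => (-x) ^ (2*m+1) / ((2*m+1)! : ℝ))
        = fun m : ℕ => -(x ^ (2*m+1) / ((2*m+1)! : ℝ)) := by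
      funext m
      rw [Odd.neg_pow ⟨m, by ring⟩, neg_div]
    have := tsum_even_add_odd (f := fun n : ℕ => (-x) ^ n / (n ! : ℝ))
      (by rw [he]; exact sum_even) (by rw [ho]; exact sum_odd.neg)
    rw [he, ho, tsum_neg] at this
    linarith
  linarith


private lemma fact_sq (m : ℕ) : (Nat.centralBinom m : ℝ) * ((m ! : ℝ))^2 = ((2*m)! : ℝ) := by
  have h := Nat.choose_mul_factorial_mul_factorial (show m ≤ 2*m by omega)
  rw [show 2*m - m = m by omega] at h
  have h2 : ((Nat.centralBinom m * m ! * m ! : ℕ) : ℝ) = (((2*m)! : ℕ) : ℝ) := by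
    rw [Nat.centralBinom_eq_two_mul_choose, h]
  push_cast at h2
  nlinarith [h2]

private lemma term_eq (x : ℝ) (m : ℕ) :
    (x/2) ^ (2*m) / ((m ! : ℝ))^2
      = (Nat.centralBinom m : ℝ) / 4^m * (x ^ (2*m) / ((2*m)! : ℝ)) := by
  have h2 : ((2:ℝ))^(2*m) = 4^m := by rw [pow_mul]; norm_num
  have hf : (0:ℝ) < (m ! : ℝ) := by positivity
  have hft : (0:ℝ) < (((2*m)! : ℝ)) := by positivity
  have h4 : (0:ℝ) < ((4:ℝ))^m := by positivity
  rw [div_pow, h2]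
  rw [div_div, show (Nat.centralBinom m : ℝ) / 4^m * (x ^ (2*m) / ((2*m)! : ℝ))
      = (Nat.centralBinom m : ℝ) * x ^ (2*m) / (4^m * ((2*m)! : ℝ)) from by ring,
    div_eq_div_iff (by positivity) (by positivity)]
  have key := fact_sq m
  linear_combination (-(x ^ (2*m)) * 4^m) * key

private lemma cb_le_four (m : ℕ) : (Nat.centralBinom m : ℝ) ≤ 4 ^ m := by
  have h1 : (1:ℝ) ≤ Real.sqrt (3*m+1) := by
    have h := Real.sqrt_le_sqrt (show (1:ℝ) ≤ 3*m+1 by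
      have : (0:ℝ) ≤ m := Nat.cast_nonneg m; linarith)
    rwa [Real.sqrt_one] at h
  calc (Nat.centralBinom m : ℝ) = (Nat.centralBinom m : ℝ) * 1 := by ring
    _ ≤ (Nat.centralBinom m : ℝ) * Real.sqrt (3*m+1) :=
        mul_le_mul_of_nonneg_left h1 (Nat.cast_nonneg _)
    _ ≤ 4 ^ m := cb_upper m

/-- There exist constants `C > 1` and `M > 0` such that for all real `x > M`,
`(1/C)·e^x/√x ≤ I₀(x) ≤ C·e^x/√x`. -/
theorem statement6 :
    ∃ C : ℝ, 1 < C ∧ ∃ M : ℝ, 0 < M ∧ ∀ x : ℝ, M < x →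
      (1 / C) * (Real.exp x / Real.sqrt x) ≤ besselI0 x ∧
        besselI0 x ≤ C * (Real.exp x / Real.sqrt x) := by
  refine ⟨8, by norm_num, 100000, by norm_num, fun x hx => ?_⟩
  have hx0 : (0:ℝ) < x := by linarith
  have hx1 : (1:ℝ) ≤ x := by linarith
  have hs : 0 < Real.sqrt x := Real.sqrt_pos.mpr hx0
  set f : ℕ → ℝ := fun m => x ^ (2*m) / ((2*m)! : ℝ) with hfdef
  set t : ℕ → ℝ := fun m => (x/2) ^ (2*m) / ((m ! : ℝ))^2 with htdef
  have hfnn : ∀ m, 0 ≤ f m := fun m => by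
    simp only [hfdef]; rw [pow_mul]; positivity
  have hfs : Summable f := sum_even
  have hteq : ∀ m, t m = (Nat.centralBinom m : ℝ) / 4^m * f m := fun m => term_eq x m
  have htnn : ∀ m, 0 ≤ t m := fun m => by
    rw [hteq m]; exact mul_nonneg (by positivity) (hfnn m)
  have htlef : ∀ m, t m ≤ f m := fun m => by
    rw [hteq m]
    calc (Nat.centralBinom m : ℝ) / 4^m * f m ≤ 1 * f m := by
          apply mul_le_mul_of_nonneg_right _ (hfnn m)
          rw [div_le_one (by positivity)]
          exact cb_le_four m
      _ = f m := one_mul _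
  have hts : Summable t := Summable.of_nonneg_of_le htnn htlef hfs
  have hI0 : besselI0 x = ∑' m, t m := rfl
  have hE := even_tsum_eq x
  have hexpnegpos := Real.exp_pos (-x)
  have hexppos := Real.exp_pos x
  have hEle : ∑' m, f m ≤ Real.exp x := by
    rw [hfdef, hE]
    have : Real.exp (-x) ≤ Real.exp x := Real.exp_le_exp.mpr (by linarith)
    linarith
  have hEge : Real.exp x / 2 ≤ ∑' m, f m := by
    rw [hfdef, hE]; linarith
  constructor
  · -- LOWER BOUND
    set K := ⌊x⌋₊ with hKdef
    have hKx : (K:ℝ) ≤ x := Nat.floor_le hx0.le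
    have hKgt : x - 1 < (K:ℝ) := by
      have := Nat.lt_floor_add_one x; linarith
    have hK1 : 1 ≤ K := Nat.le_floor (by exact_mod_cast hx1)
    have hsum1 : ∑ m ∈ Finset.range (K+1), f m + ∑' i, f (i + (K+1)) = ∑' m, f m :=
      hfs.sum_add_tsum_nat_add (K+1)
    have hterm_tail : ∀ n : ℕ, f n ≤ (1/4:ℝ)^n * Real.exp (2*x) := by
      intro n
      have h4 : (2:ℝ)^(2*n) = 4^n := by rw [pow_mul]; norm_num
      have h1 : x ^ (2*n) = (1/4:ℝ)^n * (2*x)^(2*n) := by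
        rw [mul_pow, h4, ← mul_assoc, ← mul_pow]
        norm_num
      simp only [hfdef]
      rw [h1, mul_div_assoc]
      exact mul_le_mul_of_nonneg_left (term_le_exp (by linarith) (2*n)) (by positivity)
    have hgeo : Summable (fun i : ℕ => (1/4:ℝ)^(i + (K+1)) * Real.exp (2*x)) := by
      apply Summable.mul_right
      apply Summable.comp_injective (summable_geometric_of_lt_one (by norm_num) (by norm_num))
        (add_left_injective (K+1))
    have htail : ∑' i, f (i + (K+1)) ≤ Real.exp (0.62*x + 1.39) := by
      have h1 : ∑' i, f (i + (K+1)) ≤ ∑' i : ℕ, (1/4:ℝ)^(i + (K+1)) * Real.exp (2*x) := by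
        apply Summable.tsum_le_tsum (fun i => hterm_tail (i + (K+1))) _ hgeo
        exact (summable_nat_add_iff (K+1)).mpr hfs
      have h2 : ∑' i : ℕ, (1/4:ℝ)^(i + (K+1)) * Real.exp (2*x)
          = ((1/4:ℝ)^(K+1) * Real.exp (2*x)) * (1 - 1/4:ℝ)⁻¹ := by
        rw [show (fun i : ℕ => (1/4:ℝ)^(i + (K+1)) * Real.exp (2*x))
            = fun i : ℕ => ((1/4:ℝ)^(K+1) * Real.exp (2*x)) * (1/4:ℝ)^i from by
          funext i; rw [pow_add]; ring]
        rw [tsum_mul_left, tsum_geometric_of_lt_one (by norm_num) (by norm_num)]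
      have hlog2 : (0.69:ℝ) < Real.log 2 := by
        have := Real.log_two_gt_d9; linarith
      have hpow : (1/4:ℝ)^K ≤ Real.exp (-1.38*(x-1)) := by
        have hl4 : Real.log 4 = 2 * Real.log 2 := by
          rw [show (4:ℝ) = 2^2 by norm_num, Real.log_pow]
          push_cast; ring
        have h14 : (1/4:ℝ) = Real.exp (-Real.log 4) := by
          rw [Real.exp_neg, Real.exp_log (by norm_num : (0:ℝ) < 4)]
          norm_num
        rw [h14, ← Real.exp_nat_mul]
        apply Real.exp_le_exp.mpr
        rw [hl4]
        have hKcast : (0:ℝ) ≤ (K:ℝ) := Nat.cast_nonneg _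
        nlinarith
      have hqtr : (0:ℝ) < (1/4:ℝ)^K := by positivity
      calc ∑' i, f (i + (K+1)) ≤ ((1/4:ℝ)^(K+1) * Real.exp (2*x)) * (1 - 1/4:ℝ)⁻¹ := by
            rw [← h2]; exact h1
        _ ≤ (1/4:ℝ)^K * Real.exp (2*x) := by
            rw [pow_succ]
            nlinarith [Real.exp_pos (2*x), hqtr]
        _ ≤ Real.exp (-1.38*(x-1)) * Real.exp (2*x) :=
            mul_le_mul_of_nonneg_right hpow (Real.exp_pos _).le
        _ = Real.exp (0.62*x + 1.38) := by rw [← Real.exp_add]; congr 1; ring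
        _ ≤ Real.exp (0.62*x + 1.39) := Real.exp_le_exp.mpr (by linarith)
    have hfront : ∑ m ∈ Finset.range (K+1), f m = f 0 + ∑ m ∈ Finset.Icc 1 K, f m := by
      rw [Finset.range_eq_Ico, Finset.sum_eq_sum_Ico_succ_bot (by omega : 0 < K+1)]
      rw [← Finset.Ico_add_one_right_eq_Icc]
    have hf0 : f 0 = 1 := by simp [hfdef]
    have hIcc_ge : Real.exp x / 4 ≤ ∑ m ∈ Finset.Icc 1 K, f m := by
      have h8 : (8:ℝ) ≤ Real.exp (0.38*x - 1.39) := by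
        have := Real.add_one_le_exp (0.38*x - 1.39); linarith
      have hsplit : Real.exp x = Real.exp (0.62*x+1.39) * Real.exp (0.38*x-1.39) := by
        rw [← Real.exp_add]; congr 1; ring
      have hup : Real.exp (0.62*x+1.39) ≤ Real.exp x / 8 := by
        nlinarith [Real.exp_pos (0.62*x+1.39)]
      have h1le : (1:ℝ) ≤ Real.exp (0.62*x+1.39) := by
        rw [show (1:ℝ) = Real.exp 0 from (Real.exp_zero).symm]
        exact Real.exp_le_exp.mpr (by linarith)
      have heq := hsum1
      rw [hfront, hf0] at heq
      linarith [htail, hEge]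
    have hcoef_low : ∀ m ∈ Finset.Icc 1 K, 1/(2*Real.sqrt x) * f m ≤ t m := by
      intro m hm
      rw [Finset.mem_Icc] at hm
      have hm1 : 1 ≤ m := hm.1
      have hmx : (m:ℝ) ≤ x := le_trans (by exact_mod_cast hm.2) hKx
      have hm1' : (1:ℝ) ≤ (m:ℝ) := by exact_mod_cast hm1
      have hsm : 0 < Real.sqrt m := Real.sqrt_pos.mpr (by linarith)
      have h1 : 1/(2*Real.sqrt m) ≤ (Nat.centralBinom m : ℝ)/4^m := by
        rw [div_le_div_iff₀ (by positivity) (by positivity)]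
        calc 1 * 4^m = (4:ℝ)^m := one_mul _
          _ ≤ 2*Real.sqrt m * Nat.centralBinom m := cb_lower m hm1
          _ = Nat.centralBinom m * (2*Real.sqrt m) := by ring
      have h2 : 1/(2*Real.sqrt x) ≤ 1/(2*Real.sqrt m) := by
        apply one_div_le_one_div_of_le (by positivity)
        have := Real.sqrt_le_sqrt hmx
        linarith
      rw [hteq m]
      exact mul_le_mul_of_nonneg_right (le_trans h2 h1) (hfnn m)
    calc (1/8 : ℝ) * (Real.exp x/Real.sqrt x) = 1/(2*Real.sqrt x) * (Real.exp x/4) := by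
          field_simp; ring
      _ ≤ 1/(2*Real.sqrt x) * ∑ m ∈ Finset.Icc 1 K, f m :=
          mul_le_mul_of_nonneg_left hIcc_ge (by positivity)
      _ = ∑ m ∈ Finset.Icc 1 K, 1/(2*Real.sqrt x) * f m := by rw [Finset.mul_sum]
      _ ≤ ∑ m ∈ Finset.Icc 1 K, t m := Finset.sum_le_sum hcoef_low
      _ ≤ ∑' m, t m := Summable.sum_le_tsum _ (fun m _ => htnn m) hts
      _ = besselI0 x := hI0.symm
  · -- UPPER BOUND
    set N := ⌈x/4⌉₊ with hNdef
    have hN0 : 0 < N := Nat.ceil_pos.mpr (by positivity)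
    have hN1 : 1 ≤ N := hN0
    have hNlt : (N:ℝ) < x/4 + 1 := Nat.ceil_lt_add_one (by positivity)
    have hNge : x/4 ≤ (N:ℝ) := Nat.le_ceil _
    have hind : Summable (fun m => if m < N then f m else 0) :=
      summable_of_ne_finset_zero (s := Finset.range N) (fun m hm => by
        rw [Finset.mem_range] at hm; simp [hm])
    have hgs : Summable (fun m => 2/Real.sqrt x * f m + (if m < N then f m else 0)) :=
      (hfs.mul_left _).add hind
    have htg : ∀ m, t m ≤ 2/Real.sqrt x * f m + (if m < N then f m else 0) := by
      intro m
      by_cases hm : m < N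
      · rw [if_pos hm]
        have h0 : 0 ≤ 2/Real.sqrt x * f m := mul_nonneg (by positivity) (hfnn m)
        linarith [htlef m]
      · rw [if_neg hm, add_zero, hteq m]
        push_neg at hm
        have hm1 : 1 ≤ m := le_trans hN1 hm
        have hmx : x/4 ≤ (m:ℝ) := le_trans hNge (by exact_mod_cast hm)
        have hcb0 : (0:ℝ) ≤ Nat.centralBinom m := Nat.cast_nonneg _
        have hmcast : (0:ℝ) ≤ (m:ℝ) := Nat.cast_nonneg _
        have hsx : Real.sqrt x ≤ 2 * Real.sqrt (3*m+1) := by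
          have h : (1:ℝ) * Real.sqrt x ≤ 2 * Real.sqrt (3*(m:ℝ)+1) :=
            sqrt_step (by norm_num) (by norm_num) hx0.le (by nlinarith)
          rw [one_mul] at h
          convert h using 3
        have hc : (Nat.centralBinom m : ℝ)/4^m ≤ 2/Real.sqrt x := by
          rw [div_le_div_iff₀ (by positivity) hs]
          calc (Nat.centralBinom m:ℝ) * Real.sqrt x
              ≤ (Nat.centralBinom m:ℝ) * (2*Real.sqrt (3*m+1)) :=
                mul_le_mul_of_nonneg_left hsx hcb0
            _ = 2*((Nat.centralBinom m:ℝ) * Real.sqrt (3*m+1)) := by ring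
            _ ≤ 2*4^m := by nlinarith [cb_upper m]
        exact mul_le_mul_of_nonneg_right hc (hfnn m)
    have hup1 : ∑' m, t m ≤ 2/Real.sqrt x * (∑' m, f m) + ∑ m ∈ Finset.range N, f m := by
      have h := Summable.tsum_le_tsum htg hts hgs
      rw [Summable.tsum_add (hfs.mul_left _) hind, tsum_mul_left,
        tsum_eq_sum (s := Finset.range N) (f := fun m => if m < N then f m else 0)
          (fun m hm => by rw [Finset.mem_range] at hm; simp [hm])] at h
      have heq : ∑ m ∈ Finset.range N, (if m < N then f m else 0)
          = ∑ m ∈ Finset.range N, f m :=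
        Finset.sum_congr rfl (fun m hm => by rw [Finset.mem_range] at hm; rw [if_pos hm])
      rw [heq] at h
      exact h
    have hlog2' : Real.log 2 < 0.7 := by have := Real.log_two_lt_d9; linarith
    have hlog2nn : (0:ℝ) ≤ Real.log 2 := Real.log_nonneg (by norm_num)
    have hsmall : ∀ m ∈ Finset.range N, f m ≤ Real.exp (0.85*x) := by
      intro m hm
      rw [Finset.mem_range] at hm
      have hmlt : (m:ℝ) + 1 ≤ (N:ℝ) := by exact_mod_cast hm
      have h2m : 2*(m:ℝ) ≤ x/2 := by linarith
      have hxsplit : x^(2*m) = 2^(2*m) * (x/2)^(2*m) := by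
        rw [← mul_pow]; ring_nf
      have h1 : f m = 2^(2*m) * ((x/2)^(2*m)/((2*m)!:ℝ)) := by
        simp only [hfdef]; rw [hxsplit, mul_div_assoc]
      have h2 : (x/2)^(2*m)/((2*m)!:ℝ) ≤ Real.exp (x/2) := term_le_exp (by linarith) (2*m)
      have h3 : (2:ℝ)^(2*m) = Real.exp (((2*m : ℕ):ℝ) * Real.log 2) := by
        rw [Real.exp_nat_mul, Real.exp_log (show (0:ℝ) < 2 by norm_num)]
      have h4 : ((2*m:ℕ):ℝ) * Real.log 2 ≤ 0.35*x := by
        push_cast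
        nlinarith
      calc f m = 2^(2*m) * ((x/2)^(2*m)/((2*m)!:ℝ)) := h1
        _ ≤ 2^(2*m) * Real.exp (x/2) := mul_le_mul_of_nonneg_left h2 (by positivity)
        _ = Real.exp (((2*m:ℕ):ℝ)*Real.log 2) * Real.exp (x/2) := by rw [h3]
        _ ≤ Real.exp (0.35*x) * Real.exp (x/2) :=
            mul_le_mul_of_nonneg_right (Real.exp_le_exp.mpr h4) (Real.exp_pos _).le
        _ = Real.exp (0.85*x) := by rw [← Real.exp_add]; congr 1; ring
    have hsum_small : ∑ m ∈ Finset.range N, f m ≤ x * Real.exp (0.85*x) := by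
      calc ∑ m ∈ Finset.range N, f m ≤ (Finset.range N).card • Real.exp (0.85*x) :=
            Finset.sum_le_card_nsmul _ _ _ hsmall
        _ = (N:ℝ) * Real.exp (0.85*x) := by
            rw [Finset.card_range, nsmul_eq_mul]
        _ ≤ x * Real.exp (0.85*x) := by
            apply mul_le_mul_of_nonneg_right _ (Real.exp_pos _).le
            linarith
    have hnum : x * Real.exp (0.85*x) ≤ 2/Real.sqrt x * Real.exp x := by
      rw [div_mul_eq_mul_div, le_div_iff₀ hs]
      have hsq : Real.sqrt x ≤ x := by
        have h := Real.sqrt_le_sqrt (show x ≤ x^2 by nlinarith)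
        rwa [Real.sqrt_sq hx0.le] at h
      have hcube : (0.15*x)^3/6 ≤ Real.exp (0.15*x) := by
        have h := term_le_exp (show (0:ℝ) ≤ 0.15*x by linarith) 3
        norm_num [Nat.factorial] at h
        linarith
      have hxx : x * Real.sqrt x ≤ 2*Real.exp (0.15*x) := by
        have ha : x*Real.sqrt x ≤ x^2 := by nlinarith [hsq, hx0]
        have hb : x^2 ≤ 2*((0.15*x)^3/6) := by nlinarith [sq_nonneg x, hx]
        linarith
      have hsplit : Real.exp x = Real.exp (0.85*x)*Real.exp (0.15*x) := by
        rw [← Real.exp_add]; congr 1; ring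
      calc x * Real.exp (0.85*x) * Real.sqrt x = (x*Real.sqrt x) * Real.exp (0.85*x) := by ring
        _ ≤ (2*Real.exp (0.15*x)) * Real.exp (0.85*x) :=
            mul_le_mul_of_nonneg_right hxx (Real.exp_pos _).le
        _ = 2*Real.exp x := by rw [hsplit]; ring
    rw [hI0]
    have hfin : (0:ℝ) ≤ Real.exp x / Real.sqrt x := by positivity
    calc ∑' m, t m ≤ 2/Real.sqrt x * (∑' m, f m) + ∑ m ∈ Finset.range N, f m := hup1
      _ ≤ 2/Real.sqrt x * Real.exp x + x*Real.exp (0.85*x) :=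
          add_le_add (mul_le_mul_of_nonneg_left hEle (by positivity)) hsum_small
      _ ≤ 2/Real.sqrt x * Real.exp x + 2/Real.sqrt x * Real.exp x := by linarith
      _ = 4 * (Real.exp x/Real.sqrt x) := by ring
      _ ≤ 8 * (Real.exp x/Real.sqrt x) := by linarith
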